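/- Let G be a finite group, p a prime, k a nonnegative integer, and a \in ZG. For each conjugacy class C of G, the sum over all conjugacy classes D with D^{p^k} = C of \varepsilon_D(a) is congruent modulo p to \varepsilon_C(a^{p^k}). Here D^{p^k} = C means x^{p^k} \in C for (all) x \in D. -/

import Mathlib

open Finset MonoidAlgebra
open scoped Classical

noncomputable section

variable {G : Type*} [Group G] [Fintype G]

/-- Partial augmentation of `a ∈ ℤG` at the conjugacy class `C`. -/
def paC (a : MonoidAlgebra ℤ G) (C : ConjClasses G) : ℤ :=
  ∑ x ∈ Finset.univ.filter (fun x => ConjClasses.mk x = C), a.coeff x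

/- ### Auxiliary lemmas -/

lemma aux_zpow_inv {X : Type*} {M : Type*} (r : Equiv.Perm X) (F : X → M)
    (hF : ∀ x, F (r x) = F x) : ∀ (z : ℤ) (x : X), F ((r ^ z) x) = F x := by
  have hinv : ∀ x, F (r⁻¹ x) = F x := fun x => by
    conv_rhs => rw [← Equiv.apply_symm_apply r x, hF, ← Equiv.Perm.inv_def]
  intro z
  induction z using Int.induction_on with
  | zero => simp
  | succ n ih => intro x; rw [zpow_add_one, Equiv.Perm.mul_apply, ih, hF]
  | pred n ih => intro x; rw [zpow_sub_one, Equiv.Perm.mul_apply, ih, hinv]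

lemma aux_zpow_fix {X : Type*} {r : Equiv.Perm X} {x : X} (hx : r x = x) :
    ∀ z : ℤ, (r ^ z) x = x := by
  have hinv : r⁻¹ x = x := by conv_lhs => rw [← hx, Equiv.Perm.inv_def, Equiv.symm_apply_apply]
  intro z
  induction z using Int.induction_on with
  | zero => simp
  | succ n ih => rw [zpow_add_one, Equiv.Perm.mul_apply, hx, ih]
  | pred n ih => rw [zpow_sub_one, Equiv.Perm.mul_apply, hinv, ih]

/-- Sum of a rotation-invariant `ZMod p`-valued function over the whole type equals
the sum over fixed points, when the permutation has `p`-power order. -/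
lemma rot_sum {X : Type*} [Fintype X] (p k : ℕ) (hp : p.Prime) (r : Equiv.Perm X)
    (hr : r ^ (p ^ k) = 1) (F : X → ZMod p) (hF : ∀ x, F (r x) = F x) :
    ∑ x, F x = ∑ x ∈ univ.filter (fun x => r x = x), F x := by
  classical
  rw [← Finset.sum_filter_add_sum_filter_not univ (fun x => r x = x) F]
  suffices h : ∑ x ∈ univ.filter (fun x => ¬ r x = x), F x = 0 by rw [h, add_zero]
  set H : Subgroup (Equiv.Perm X) := Subgroup.zpowers r with hH
  haveI : Fintype H := Fintype.ofFinite H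
  have hFH : ∀ (h : H) (x : X), F (h • x) = F x := by
    rintro ⟨σ, hσ⟩ x
    obtain ⟨z, hz⟩ := Subgroup.mem_zpowers_iff.mp hσ
    have hsx : (⟨σ, hσ⟩ : H) • x = (r ^ z) x := by
      show σ x = (r ^ z) x
      rw [hz]
    rw [hsx, aux_zpow_inv r F hF]
  have horb : ∀ x y : X, y ∈ MulAction.orbit H x → F y = F x := by
    rintro x y ⟨h, rfl⟩; exact hFH h x
  set Ω := MulAction.orbitRel.Quotient H X with hΩ
  haveI : Fintype Ω := Fintype.ofFinite Ω
  rw [← Finset.sum_fiberwise (univ.filter (fun x => ¬ r x = x))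
    (fun x => (⟦x⟧ : Ω)) F]
  refine Finset.sum_eq_zero fun ω _ => ?_
  rcases Finset.eq_empty_or_nonempty
    ((univ.filter (fun x => ¬ r x = x)).filter (fun x => (⟦x⟧ : Ω) = ω)) with he | ⟨x₀, hx₀⟩
  · rw [he, Finset.sum_empty]
  · simp only [Finset.mem_filter, Finset.mem_univ, true_and] at hx₀
    obtain ⟨hx₀fix, hx₀ω⟩ := hx₀
    have hmem : ∀ y : X, ((¬ r y = y) ∧ (⟦y⟧ : Ω) = ω) ↔ y ∈ MulAction.orbit H x₀ := by
      intro y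
      constructor
      · rintro ⟨-, hy⟩
        rw [← hx₀ω] at hy
        exact Quotient.exact' hy
      · intro hy
        have hyx : (⟦y⟧ : Ω) = ⟦x₀⟧ := Quotient.sound' hy
        refine ⟨?_, hyx.trans hx₀ω⟩
        intro hfix
        obtain ⟨⟨σ, hσ⟩, hs⟩ := hy
        obtain ⟨z, hz⟩ := Subgroup.mem_zpowers_iff.mp hσ
        have hs' : σ x₀ = y := hs
        have hxy : x₀ = y := by
          have h1 : (r ^ (-z)) y = y := aux_zpow_fix hfix (-z)
          calc x₀ = σ⁻¹ (σ x₀) := (Equiv.symm_apply_apply σ x₀).symm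
            _ = σ⁻¹ y := by rw [hs']
            _ = (r ^ (-z)) y := by rw [zpow_neg, hz]
            _ = y := h1
        exact hx₀fix (hxy ▸ hfix)
    have hfeq : (univ.filter (fun x => ¬ r x = x)).filter (fun x => (⟦x⟧ : Ω) = ω)
        = (MulAction.orbit H x₀).toFinset := by
      ext y
      simp only [Finset.mem_filter, Finset.mem_univ, true_and, Set.mem_toFinset]
      exact hmem y
    rw [hfeq]
    have hconst : ∀ y ∈ (MulAction.orbit H x₀).toFinset, F y = F x₀ := by
      intro y hy
      exact horb x₀ y (Set.mem_toFinset.mp hy)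
    rw [Finset.sum_congr rfl hconst, Finset.sum_const]
    have hcard : (MulAction.orbit H x₀).toFinset.card = Fintype.card (MulAction.orbit H x₀) :=
      Set.toFinset_card _
    have hdvd : Fintype.card (MulAction.orbit H x₀) ∣ p ^ k := by
      have h1 := MulAction.card_orbit_mul_card_stabilizer_eq_card_group H x₀
      have h2 : Fintype.card (MulAction.orbit H x₀) ∣ Fintype.card H := ⟨_, h1.symm⟩
      refine h2.trans ?_
      have : Fintype.card H = orderOf r := by
        rw [← Nat.card_eq_fintype_card]; exact Nat.card_zpowers r
      rw [this]
      exact orderOf_dvd_of_pow_eq_one hr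
    have hne1 : Fintype.card (MulAction.orbit H x₀) ≠ 1 := by
      intro h1
      have hsub : Subsingleton (MulAction.orbit H x₀) :=
        Fintype.card_le_one_iff_subsingleton.mp h1.le
      have hmem1 : x₀ ∈ MulAction.orbit H x₀ := MulAction.mem_orbit_self x₀
      have hmem2 : r x₀ ∈ MulAction.orbit H x₀ := ⟨⟨r, Subgroup.mem_zpowers r⟩, rfl⟩
      have : (⟨r x₀, hmem2⟩ : MulAction.orbit H x₀) = ⟨x₀, hmem1⟩ := Subsingleton.elim _ _
      exact hx₀fix (congrArg Subtype.val this)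
    have hpdvd : p ∣ (MulAction.orbit H x₀).toFinset.card := by
      rw [hcard]
      obtain ⟨j, hj, hcardj⟩ := (Nat.dvd_prime_pow hp).mp hdvd
      rcases Nat.eq_zero_or_pos j with rfl | hjpos
      · rw [pow_zero] at hcardj; exact absurd hcardj hne1
      · rw [hcardj]; exact dvd_pow_self p hjpos.ne'
    obtain ⟨m, hm⟩ := hpdvd
    rw [hm, nsmul_eq_mul]
    simp [Nat.cast_mul, ZMod.natCast_self]

lemma fin_castSucc_add_one {n : ℕ} (i : Fin n) : (i.castSucc : Fin (n+1)) + 1 = i.succ := by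
  have hn : 0 < n := i.pos
  apply Fin.ext
  rw [Fin.add_def]
  simp only [Fin.coe_castSucc, Fin.val_succ, Fin.val_one']
  rw [Nat.mod_eq_of_lt (show 1 < n + 1 by omega),
    Nat.mod_eq_of_lt (show i.val + 1 < n + 1 by omega)]

lemma fin_last_add_one {n : ℕ} : (Fin.last n) + 1 = (0 : Fin (n+1)) := by
  apply Fin.ext
  rw [Fin.add_def]
  simp only [Fin.val_last, Fin.val_one', Fin.val_zero]
  cases n with
  | zero => decide
  | succ m => rw [Nat.one_mod, Nat.mod_self]

/-- Rotating a tuple conjugates its product. -/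
lemma rot_prod {H : Type*} [Group H] {n : ℕ} (f : Fin (n+1) → H) :
    (List.ofFn (fun i => f (i + 1))).prod = (f 0)⁻¹ * (List.ofFn f).prod * f 0 := by
  have h1 : (List.ofFn f).prod = f 0 * (List.ofFn (fun i => f i.succ)).prod := by
    rw [List.ofFn_succ, List.prod_cons]
  have h2 : (List.ofFn (fun i : Fin (n+1) => f (i + 1))).prod
      = (List.ofFn (fun i : Fin n => f (i.castSucc + 1))).prod * f (Fin.last n + 1) := by
    rw [List.ofFn_succ' (fun i : Fin (n+1) => f (i + 1)), List.prod_concat]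
  rw [h2, h1]
  simp only [fin_castSucc_add_one, fin_last_add_one]
  group

/-- A tuple fixed by rotation is constant. -/
lemma fixed_const {H : Type*} {n : ℕ} {f : Fin (n+1) → H} (h : ∀ i, f (i + 1) = f i) :
    ∀ i, f i = f 0 := by
  intro i
  induction i using Fin.induction with
  | zero => rfl
  | succ j ih => rw [← fin_castSucc_add_one j, h, ih]

/-- Coefficient of `a ^ n` as a sum over tuples. -/
lemma pow_apply_expand (a : MonoidAlgebra ℤ G) (n : ℕ) (x : G) :
    (a ^ n).coeff x = ∑ f : Fin n → G,
      if (List.ofFn f).prod = x then (∏ i, a.coeff (f i)) else 0 := by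
  induction n generalizing x with
  | zero =>
    rw [pow_zero, Fintype.sum_unique]
    simp [MonoidAlgebra.one_def, Finsupp.single_apply, List.ofFn_zero]
  | succ n ih =>
    rw [pow_succ', MonoidAlgebra.mul_apply_left,
      Finsupp.sum_fintype _ _ (fun y => by simp)]
    have key : ∀ y : G, a.coeff y * (a ^ n).coeff (y⁻¹ * x)
        = ∑ f : Fin n → G,
          if (List.ofFn f).prod = y⁻¹ * x then a.coeff y * (∏ i, a.coeff (f i)) else 0 := by
      intro y
      rw [ih, Finset.mul_sum]
      exact Finset.sum_congr rfl fun f _ => by rw [mul_ite, mul_zero]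
    simp_rw [key]
    rw [← Equiv.sum_comp (Fin.consEquiv (fun _ : Fin (n+1) => G))
      (fun f : Fin (n + 1) → G => if (List.ofFn f).prod = x then (∏ i, a.coeff (f i)) else 0)]
    rw [Fintype.sum_prod_type]
    refine Finset.sum_congr rfl fun y _ => Finset.sum_congr rfl fun f _ => ?_
    have h1 : (Fin.consEquiv (fun _ : Fin (n+1) => G)) (y, f) = Fin.cons y f := rfl
    rw [h1]
    have h2 : (List.ofFn (Fin.cons y f : Fin (n+1) → G)).prod = y * (List.ofFn f).prod := by
      rw [List.ofFn_succ, List.prod_cons]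
      simp [Fin.cons_succ]
    have h3 : (∏ i, a.coeff ((Fin.cons y f : Fin (n+1) → G) i)) = a.coeff y * ∏ i, a.coeff (f i) := by
      rw [Fin.prod_univ_succ]
      simp [Fin.cons_succ]
    rw [h2, h3]
    congr 1
    simp [eq_inv_mul_iff_mul_eq]

/-- Partial augmentation of `a ^ n` as a sum over tuples. -/
lemma paC_pow (a : MonoidAlgebra ℤ G) (n : ℕ) (C : ConjClasses G) :
    paC (a ^ n) C = ∑ f : Fin n → G,
      if ConjClasses.mk (List.ofFn f).prod = C then (∏ i, a.coeff (f i)) else 0 := by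
  unfold paC
  simp_rw [pow_apply_expand]
  rw [Finset.sum_comm]
  refine Finset.sum_congr rfl fun f _ => ?_
  rw [Finset.sum_ite_eq]
  simp

lemma mk_pow_eq {x y : G} (h : ConjClasses.mk x = ConjClasses.mk y) (n : ℕ) :
    ConjClasses.mk (x ^ n) = ConjClasses.mk (y ^ n) := by
  rw [ConjClasses.mk_eq_mk_iff_isConj] at h ⊢
  obtain ⟨c, hc⟩ := isConj_iff.mp h
  exact isConj_iff.mpr ⟨c, by rw [← hc, ← conj_pow]⟩

open Fin.NatCast in
/-- Main auxiliary version with the exponent written as `m + 1`. -/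
lemma main_aux (p m k : ℕ) (hp : p.Prime) (hm : p ^ k = m + 1)
    (a : MonoidAlgebra ℤ G) (C : ConjClasses G) :
    (∑ D : ConjClasses G,
        if ∃ x : G, ConjClasses.mk x = D ∧ ConjClasses.mk (x ^ (m + 1)) = C
        then paC a D else 0)
      ≡ paC (a ^ (m + 1)) C [ZMOD (p : ℤ)] := by
  haveI : Fact p.Prime := ⟨hp⟩
  rw [← ZMod.intCast_eq_intCast_iff]
  -- the rotation permutation on tuples
  set r : Equiv.Perm (Fin (m+1) → G) :=
    { toFun := fun f i => f (i + 1)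
      invFun := fun f i => f (i - 1)
      left_inv := fun f => funext fun i => by simp
      right_inv := fun f => funext fun i => by simp } with hr_def
  have hr_apply : ∀ (f : Fin (m+1) → G) (i : Fin (m+1)), r f i = f (i + 1) := fun f i => rfl
  set F : (Fin (m+1) → G) → ZMod p := fun f =>
    if ConjClasses.mk (List.ofFn f).prod = C then ∏ i, ((a.coeff (f i) : ℤ) : ZMod p) else 0
    with hF_def
  -- r has p-power order
  have hrpow : r ^ (p ^ k) = 1 := by
    have claim : ∀ (j : ℕ) (f : Fin (m+1) → G) (i : Fin (m+1)),
        (r ^ j) f i = f (i + (j : Fin (m+1))) := by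
      intro j
      induction j with
      | zero => intro f i; simp
      | succ j ihj =>
        intro f i
        rw [pow_succ, Equiv.Perm.mul_apply, ihj, hr_apply]
        congr 1
        push_cast
        rw [add_assoc]
    ext f i
    rw [claim, Equiv.Perm.one_apply]
    congr 1
    rw [show ((p ^ k : ℕ) : Fin (m+1)) = 0 by rw [hm]; exact Fin.natCast_self _, add_zero]
  -- F is rotation invariant
  have hF : ∀ f, F (r f) = F f := by
    intro f
    show (if ConjClasses.mk (List.ofFn (fun i => f (i + 1))).prod = C
        then ∏ i, ((a.coeff (f (i + 1)) : ℤ) : ZMod p) else 0) = F f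
    have hcond : ConjClasses.mk (List.ofFn (fun i => f (i + 1))).prod
        = ConjClasses.mk (List.ofFn f).prod := by
      rw [rot_prod f, ConjClasses.mk_eq_mk_iff_isConj]
      exact isConj_iff.mpr ⟨f 0, by group⟩
    have hval : (∏ i, ((a.coeff (f (i + 1)) : ℤ) : ZMod p)) = ∏ i, ((a.coeff (f i) : ℤ) : ZMod p) :=
      Equiv.prod_comp (Equiv.addRight (1 : Fin (m+1))) (fun i => ((a.coeff (f i) : ℤ) : ZMod p))
    rw [hcond, hval]
  -- the fixed points are the constant tuples
  have hfixset : univ.filter (fun f => r f = f)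
      = Finset.image (fun g : G => (fun _ => g : Fin (m+1) → G)) univ := by
    ext f
    simp only [Finset.mem_filter, Finset.mem_univ, true_and, Finset.mem_image]
    constructor
    · intro hf
      have h : ∀ i, f (i + 1) = f i := fun i => congrFun hf i
      exact ⟨f 0, funext fun i => (fixed_const h i).symm⟩
    · rintro ⟨g, rfl⟩
      rfl
  have hfixsum : ∑ f ∈ univ.filter (fun f => r f = f), F f = ∑ g : G, F (fun _ => g) := by
    rw [hfixset, Finset.sum_image (fun g _ g' _ h => congrFun h 0)]
  -- value of F on constant tuples
  have hconstF : ∀ g : G, F (fun _ => g)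
      = if ConjClasses.mk (g ^ (m + 1)) = C then ((a.coeff g : ℤ) : ZMod p) else 0 := by
    intro g
    have h1 : (List.ofFn (fun _ : Fin (m+1) => g)).prod = g ^ (m+1) := by
      rw [List.ofFn_const, List.prod_replicate]
    have h2 : (∏ _i : Fin (m+1), ((a.coeff g : ℤ) : ZMod p)) = ((a.coeff g : ℤ) : ZMod p) ^ (m+1) := by
      rw [Finset.prod_const, Finset.card_univ, Fintype.card_fin]
    show (if ConjClasses.mk (List.ofFn (fun _ : Fin (m+1) => g)).prod = C
        then ∏ _i : Fin (m+1), ((a.coeff g : ℤ) : ZMod p) else 0) = _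
    rw [h1, h2, ← hm, ZMod.pow_card_pow]
  -- right-hand side
  have hRcast : ((paC (a ^ (m + 1)) C : ℤ) : ZMod p) = ∑ f : Fin (m+1) → G, F f := by
    rw [paC_pow, Int.cast_sum]
    refine Finset.sum_congr rfl fun f _ => ?_
    rw [apply_ite (fun z : ℤ => (z : ZMod p)), Int.cast_prod, Int.cast_zero]
  -- left-hand side
  have hLcast : (((∑ D : ConjClasses G,
        if ∃ x : G, ConjClasses.mk x = D ∧ ConjClasses.mk (x ^ (m + 1)) = C
        then paC a D else 0) : ℤ) : ZMod p)
      = ∑ g : G, if ConjClasses.mk (g ^ (m + 1)) = C then ((a.coeff g : ℤ) : ZMod p) else 0 := by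
    rw [Int.cast_sum]
    have step1 : ∀ D : ConjClasses G,
        (((if ∃ x : G, ConjClasses.mk x = D ∧ ConjClasses.mk (x ^ (m + 1)) = C
          then paC a D else 0) : ℤ) : ZMod p)
        = ∑ g ∈ univ.filter (fun g : G => ConjClasses.mk g = D),
            (if ConjClasses.mk (g ^ (m + 1)) = C then ((a.coeff g : ℤ) : ZMod p) else 0) := by
      intro D
      rcases em (∃ x : G, ConjClasses.mk x = D ∧ ConjClasses.mk (x ^ (m + 1)) = C)
        with hD | hD
      · rw [if_pos hD]
        obtain ⟨x, hxD, hxC⟩ := hD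
        unfold paC
        rw [Int.cast_sum]
        refine Finset.sum_congr rfl fun g hg => ?_
        rw [Finset.mem_filter] at hg
        rw [if_pos ((mk_pow_eq (hg.2.trans hxD.symm) (m + 1)).trans hxC)]
      · rw [if_neg hD, Int.cast_zero]
        symm
        refine Finset.sum_eq_zero fun g hg => ?_
        rw [Finset.mem_filter] at hg
        rw [if_neg fun hc => hD ⟨g, hg.2, hc⟩]
    simp_rw [step1]
    exact Finset.sum_fiberwise univ (fun g : G => ConjClasses.mk g)
      (fun g => if ConjClasses.mk (g ^ (m + 1)) = C then ((a.coeff g : ℤ) : ZMod p) else 0)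
  rw [hLcast, hRcast, rot_sum p k hp r hrpow F hF]
  refine (Finset.sum_congr rfl fun g _ => (hconstF g).symm).trans ?_
  convert hfixsum.symm using 2
  exact @Finset.filter_congr _ _ _ (fun a => Classical.propDecidable (r a = a))
    (fun a => Fintype.decidablePiFintype (r a) a) _ (fun x _ => Iff.rfl)

/-- Folklore congruence: `∑_{D^{p^k} = C} ε_D(a) ≡ ε_C(a^{p^k}) mod p`. -/
theorem folklore_congruence (p : ℕ) (hp : p.Prime) (k : ℕ)
    (a : MonoidAlgebra ℤ G) (C : ConjClasses G) :
    (∑ D : ConjClasses G,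
        if ∃ x : G, ConjClasses.mk x = D ∧ ConjClasses.mk (x ^ p ^ k) = C
        then paC a D else 0)
      ≡ paC (a ^ p ^ k) C [ZMOD (p : ℤ)] := by
  have hq0 : p ^ k ≠ 0 := pow_ne_zero k hp.pos.ne'
  obtain ⟨m, hm⟩ := Nat.exists_eq_succ_of_ne_zero hq0
  rw [hm]
  exact main_aux p m k hp hm a C

end
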